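/- Let C be the generalized Cartan matrix of a connected graph that is neither Dynkin (A, D, E) nor extended Dynkin (Ã, D̃, Ẽ) — i.e. a wild graph. Then the kernel of C contains no nonzero vector whose components are all nonnegative. -/

import Mathlib

/-- Let `C` be the generalised Cartan matrix of a finite connected graph which is
neither Dynkin (i.e. `C` is not positive definite) nor extended Dynkin (i.e. it is not the case
that `C` is positive semidefinite without being positive definite) — a wild graph.  Then the
kernel of `C` contains no nonzero componentwise-nonnegative vector. -/
theorem wild_cartan_kernel_mixed (n : ℕ)
    (m : Fin (n + 1) → Fin (n + 1) → ℕ)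
    (hsymm : ∀ p q, m p q = m q p) (hloop : ∀ p, m p p = 0)
    (hconn : ∀ p q, Relation.ReflTransGen (fun a b => 0 < m a b) p q)
    (C : Matrix (Fin (n + 1)) (Fin (n + 1)) ℝ)
    (hC : ∀ p q, C p q = if p = q then 2 else -(m p q : ℝ))
    (hnotDynkin : ¬ C.PosDef)
    (hnotExtended : ¬ (C.PosSemidef ∧ ¬ C.PosDef)) :
    ∀ x : Fin (n + 1) → ℝ, C.mulVec x = 0 → (∀ i, 0 ≤ x i) → x = 0 := by
  intro x hker hnn
  by_contra hx0
  -- rows of C applied to a general vector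
  have hrowgen : ∀ (v : Fin (n + 1) → ℝ) p,
      ∑ q, C p q * v q = 2 * v p - ∑ q, (m p q : ℝ) * v q := by
    intro v p
    have : ∀ q, C p q * v q
        = (if p = q then (2:ℝ) * v q else 0) - (m p q : ℝ) * v q := by
      intro q
      by_cases hpq : p = q
      · subst hpq; simp [hC, hloop]
      · rw [hC]; simp only [if_neg hpq]; ring
    rw [Finset.sum_congr rfl fun q _ => this q, Finset.sum_sub_distrib,
      Finset.sum_ite_eq]
    simp
  have hrow : ∀ p, ∑ q, (m p q : ℝ) * x q = 2 * x p := by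
    intro p
    have h := congrFun hker p
    have h2 : ∑ q, C p q * x q = 0 := h
    rw [hrowgen x p] at h2
    linarith
  -- positivity of x everywhere
  obtain ⟨p₀, hp₀⟩ := Function.ne_iff.mp hx0
  have hp₀pos : 0 < x p₀ := lt_of_le_of_ne (hnn p₀) (Ne.symm (by simpa using hp₀))
  have step : ∀ a b : Fin (n + 1), 0 < m a b → 0 < x a → 0 < x b := by
    intro a b hm ha
    have h1 : (m b a : ℝ) * x a ≤ ∑ r, (m b r : ℝ) * x r :=
      Finset.single_le_sum (f := fun r => (m b r : ℝ) * x r)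
        (fun r _ => mul_nonneg (Nat.cast_nonneg _) (hnn r)) (Finset.mem_univ a)
    have hm' : 0 < m b a := by rw [← hsymm]; exact hm
    have h2 : 0 < (m b a : ℝ) * x a :=
      mul_pos (by exact_mod_cast hm') ha
    have := hrow b
    linarith
  have hpos : ∀ q, 0 < x q := by
    intro q
    have h := hconn p₀ q
    induction h with
    | refl => exact hp₀pos
    | tail _ h2 ih => exact step _ _ h2 ih
  -- C is symmetric, hence Hermitian
  have herm : C.IsHermitian := by
    show C.conjTranspose = C
    ext i j
    simp only [Matrix.conjTranspose_apply, star_trivial, hC, hsymm j i]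
    by_cases h : i = j
    · simp [h]
    · simp [h, Ne.symm h]
  -- C is positive semidefinite
  have hpsd : C.PosSemidef := by
    refine Matrix.posSemidef_iff_dotProduct_mulVec.mpr ⟨herm, fun y => ?_⟩
    have hL : dotProduct (star y) (C.mulVec y)
        = (∑ p, 2 * y p ^ 2) - ∑ p, ∑ q, (m p q : ℝ) * y p * y q := by
      simp only [dotProduct, Matrix.mulVec, Pi.star_apply, star_trivial]
      rw [← Finset.sum_sub_distrib]
      refine Finset.sum_congr rfl fun p _ => ?_
      rw [hrowgen y p, mul_sub, Finset.mul_sum]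
      congr 1
      · ring
      · exact Finset.sum_congr rfl fun q _ => by ring
    -- key identity for the quadratic form
    have hG : ∀ p, ∑ q, (m p q : ℝ) * (x q / x p) * y p ^ 2 = 2 * y p ^ 2 := by
      intro p
      have hxp : x p ≠ 0 := (hpos p).ne'
      have : ∀ q, (m p q : ℝ) * (x q / x p) * y p ^ 2
          = ((m p q : ℝ) * x q) * (y p ^ 2 / x p) := fun q => by ring
      rw [Finset.sum_congr rfl fun q _ => this q, ← Finset.sum_mul, hrow p]
      field_simp
    have hS : ∑ p, ∑ q, (m p q : ℝ) * x p * x q * (y p / x p - y q / x q) ^ 2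
        = 2 * dotProduct (star y) (C.mulVec y) := by
      have hterm : ∀ p q, (m p q : ℝ) * x p * x q * (y p / x p - y q / x q) ^ 2
          = (m p q : ℝ) * (x q / x p) * y p ^ 2 + (m p q : ℝ) * (x p / x q) * y q ^ 2
            - 2 * ((m p q : ℝ) * y p * y q) := by
        intro p q
        have hxp : x p ≠ 0 := (hpos p).ne'
        have hxq : x q ≠ 0 := (hpos q).ne'
        field_simp
        ring
      have hHG : ∑ p, ∑ q, (m p q : ℝ) * (x p / x q) * y q ^ 2
          = ∑ p, ∑ q, (m p q : ℝ) * (x q / x p) * y p ^ 2 := by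
        rw [Finset.sum_comm]
        refine Finset.sum_congr rfl fun p _ => Finset.sum_congr rfl fun q _ => ?_
        rw [hsymm q p]
      calc ∑ p, ∑ q, (m p q : ℝ) * x p * x q * (y p / x p - y q / x q) ^ 2
          = ∑ p, ∑ q, ((m p q : ℝ) * (x q / x p) * y p ^ 2
              + (m p q : ℝ) * (x p / x q) * y q ^ 2
              - 2 * ((m p q : ℝ) * y p * y q)) := by
            exact Finset.sum_congr rfl fun p _ => Finset.sum_congr rfl fun q _ => hterm p q
        _ = (∑ p, ∑ q, (m p q : ℝ) * (x q / x p) * y p ^ 2)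
              + (∑ p, ∑ q, (m p q : ℝ) * (x p / x q) * y q ^ 2)
              - 2 * ∑ p, ∑ q, (m p q : ℝ) * y p * y q := by
            simp [Finset.sum_add_distrib, Finset.sum_sub_distrib, Finset.mul_sum]
        _ = (∑ p, 2 * y p ^ 2) + (∑ p, 2 * y p ^ 2)
              - 2 * ∑ p, ∑ q, (m p q : ℝ) * y p * y q := by
            rw [hHG, Finset.sum_congr rfl fun p _ => hG p]
        _ = 2 * dotProduct (star y) (C.mulVec y) := by rw [hL]; ring
    have hS0 : 0 ≤ ∑ p, ∑ q, (m p q : ℝ) * x p * x q * (y p / x p - y q / x q) ^ 2 := by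
      refine Finset.sum_nonneg fun p _ => Finset.sum_nonneg fun q _ => ?_
      have := (hpos p).le
      have := (hpos q).le
      positivity
    linarith [hS ▸ hS0]
  exact hnotExtended ⟨hpsd, hnotDynkin⟩
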